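/- Let g : ℝ → ℝ be continuous and let x̃ = (x̃₁, x̃₂) : ℝ → ℝ² solve x̃' = A x̃ + ε, where A is the antisymmetric matrix with entries A₁₂ = −g, A₂₁ = g, and ε : ℝ → ℝ² is continuous with ‖ε(τ)‖ ≤ 9 for all τ. Define ξ(τ) = ∫_{τ₀}^{τ} g(s) ds + φ₀ and x(τ) = r₀(cos ξ(τ), sin ξ(τ)), where r₀ and φ₀ are chosen so that x(τ₀) = x̃(τ₀). Then ‖x̃(τ) − x(τ)‖ ≤ 9|τ − τ₀| for all τ. -/

import Mathlib

open Real

/-- The rotating-frame approximation estimate. If `x̃ = (x̃₁, x̃₂)` solves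
`x̃' = A x̃ + ε` with `A` the antisymmetric matrix of angular velocity `g`, `‖ε‖ ≤ 9`,
and `x(τ) = r₀(cos ξ(τ), sin ξ(τ))` with `ξ(τ) = ∫_{τ₀}^τ g + φ₀` agrees with `x̃`
at `τ₀`, then `‖x̃(τ) − x(τ)‖ ≤ 9|τ − τ₀|`. -/
theorem rotating_frame_estimate (g e1 e2 x1 x2 ξ : ℝ → ℝ) (τ₀ φ₀ r₀ : ℝ)
    (hg : Continuous g) (he1 : Continuous e1) (he2 : Continuous e2)
    (heps : ∀ τ : ℝ, Real.sqrt ((e1 τ) ^ 2 + (e2 τ) ^ 2) ≤ 9)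
    (hx1 : ∀ τ : ℝ, HasDerivAt x1 (-(g τ) * x2 τ + e1 τ) τ)
    (hx2 : ∀ τ : ℝ, HasDerivAt x2 (g τ * x1 τ + e2 τ) τ)
    (hξ : ∀ τ : ℝ, ξ τ = (∫ s in τ₀..τ, g s) + φ₀)
    (hinit1 : r₀ * Real.cos (ξ τ₀) = x1 τ₀)
    (hinit2 : r₀ * Real.sin (ξ τ₀) = x2 τ₀) :
    ∀ τ : ℝ, Real.sqrt ((x1 τ - r₀ * Real.cos (ξ τ)) ^ 2 +
      (x2 τ - r₀ * Real.sin (ξ τ)) ^ 2) ≤ 9 * |τ - τ₀| := by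
  -- ξ has derivative g
  have hξ' : ∀ τ : ℝ, HasDerivAt ξ (g τ) τ := by
    intro τ
    have h1 : HasDerivAt (fun t => (∫ s in τ₀..t, g s) + φ₀) (g τ) τ := by
      have := (intervalIntegral.integral_hasDerivAt_right
        (hg.intervalIntegrable τ₀ τ)
        hg.aestronglyMeasurable.stronglyMeasurableAtFilter
        hg.continuousAt)
      exact this.add_const φ₀
    exact h1.congr_of_eventuallyEq (Filter.Eventually.of_forall fun t => hξ t)
  -- complex rotating frame function
  set z : ℝ → ℂ := fun τ => ((x1 τ : ℂ) + (x2 τ : ℂ) * Complex.I) *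
    Complex.exp (-(ξ τ : ℂ) * Complex.I) with hz
  have hzd : ∀ τ : ℝ, HasDerivAt z
      (((e1 τ : ℂ) + (e2 τ : ℂ) * Complex.I) * Complex.exp (-(ξ τ : ℂ) * Complex.I)) τ := by
    intro τ
    have hX : HasDerivAt (fun t => ((x1 t : ℂ) + (x2 t : ℂ) * Complex.I))
        ((-(g τ) * x2 τ + e1 τ : ℝ) + ((g τ * x1 τ + e2 τ : ℝ) : ℂ) * Complex.I) τ :=
      ((hx1 τ).ofReal_comp).add (((hx2 τ).ofReal_comp).mul_const Complex.I)
    have hE : HasDerivAt (fun t => Complex.exp (-(ξ t : ℂ) * Complex.I))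
        (Complex.exp (-(ξ τ : ℂ) * Complex.I) * (-(g τ : ℂ) * Complex.I)) τ := by
      have h2 : HasDerivAt (fun t : ℝ => -(ξ t : ℂ) * Complex.I) (-(g τ : ℂ) * Complex.I) τ :=
        (((hξ' τ).ofReal_comp).neg).mul_const Complex.I
      exact h2.cexp
    have := hX.mul hE
    convert this using 1
    · rfl
    · rfl
    push_cast
    linear_combination ((g τ : ℂ) * (x2 τ) * Complex.exp (-(ξ τ : ℂ) * Complex.I)) * Complex.I_sq
  -- derivative norm bound
  have hbound : ∀ τ : ℝ,
      ‖((e1 τ : ℂ) + (e2 τ : ℂ) * Complex.I) * Complex.exp (-(ξ τ : ℂ) * Complex.I)‖ ≤ 9 := by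
    intro τ
    rw [norm_mul]
    have h1 : ‖Complex.exp (-(ξ τ : ℂ) * Complex.I)‖ = 1 := by
      have : (-(ξ τ : ℂ)) = ((-ξ τ : ℝ) : ℂ) := by push_cast; ring
      rw [this]
      exact Complex.norm_exp_ofReal_mul_I _
    rw [h1, mul_one]
    calc ‖(e1 τ : ℂ) + (e2 τ : ℂ) * Complex.I‖
        = Real.sqrt ((e1 τ) ^ 2 + (e2 τ) ^ 2) := Complex.norm_add_mul_I _ _
      _ ≤ 9 := heps τ
  intro τ
  -- mean value inequality
  have key : ‖z τ - z τ₀‖ ≤ 9 * ‖τ - τ₀‖ := by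
    apply (convex_univ (𝕜 := ℝ) (E := ℝ)).norm_image_sub_le_of_norm_hasDerivWithin_le
      (f := z) (f' := fun t => ((e1 t : ℂ) + (e2 t : ℂ) * Complex.I) *
        Complex.exp (-(ξ t : ℂ) * Complex.I))
      (fun t _ => (hzd t).hasDerivWithinAt) (fun t _ => hbound t) (Set.mem_univ τ₀)
      (Set.mem_univ τ)
  have hz0 : z τ₀ = (r₀ : ℂ) := by
    rw [hz]
    simp only
    rw [← hinit1, ← hinit2]
    have : ((r₀ * Real.cos (ξ τ₀) : ℝ) : ℂ) + ((r₀ * Real.sin (ξ τ₀) : ℝ) : ℂ) * Complex.I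
        = (r₀ : ℂ) * Complex.exp ((ξ τ₀ : ℂ) * Complex.I) := by
      rw [Complex.exp_mul_I]
      push_cast
      ring
    rw [this, mul_assoc, ← Complex.exp_add]
    simp
  have hnorm : ‖z τ - z τ₀‖ = Real.sqrt ((x1 τ - r₀ * Real.cos (ξ τ)) ^ 2 +
      (x2 τ - r₀ * Real.sin (ξ τ)) ^ 2) := by
    rw [hz0, hz]
    simp only
    have : ((x1 τ : ℂ) + (x2 τ : ℂ) * Complex.I) * Complex.exp (-(ξ τ : ℂ) * Complex.I) - r₀
        = (((x1 τ - r₀ * Real.cos (ξ τ) : ℝ) : ℂ)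
          + ((x2 τ - r₀ * Real.sin (ξ τ) : ℝ) : ℂ) * Complex.I)
          * Complex.exp (-(ξ τ : ℂ) * Complex.I) := by
      have hr : (r₀ : ℂ) = ((r₀ * Real.cos (ξ τ) : ℝ) + ((r₀ * Real.sin (ξ τ) : ℝ) : ℂ)
          * Complex.I) * Complex.exp (-(ξ τ : ℂ) * Complex.I) := by
        have h2 : ((r₀ * Real.cos (ξ τ) : ℝ) : ℂ) + ((r₀ * Real.sin (ξ τ) : ℝ) : ℂ) * Complex.I
            = (r₀ : ℂ) * Complex.exp ((ξ τ : ℂ) * Complex.I) := by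
          rw [Complex.exp_mul_I]
          push_cast
          ring
        rw [h2, mul_assoc, ← Complex.exp_add]
        simp
      rw [hr]
      push_cast
      ring
    rw [this, norm_mul]
    have h1 : ‖Complex.exp (-(ξ τ : ℂ) * Complex.I)‖ = 1 := by
      have : (-(ξ τ : ℂ)) = ((-ξ τ : ℝ) : ℂ) := by push_cast; ring
      rw [this]
      exact Complex.norm_exp_ofReal_mul_I _
    rw [h1, mul_one]
    exact Complex.norm_add_mul_I _ _
  rw [← hnorm]
  simpa using key
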